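/- Let Ω and X be nonempty compact metric spaces and 0 ≤ λ < 1. Let I be a countable index set, θ_i : Ω → Ω continuous maps, p_i : Ω → [0,∞) continuous functions with ∑_{i∈I} p_i(ω) = 1 for every ω ∈ Ω and ∑_{i∈I} sup_{ω∈Ω} p_i(ω) < ∞, and let G_i : Ω × X → X be continuous maps such that for every i ∈ I and ω ∈ Ω the map x ↦ G_i(ω,x) is Lipschitz with constant λ. Let K be the operator on sections ν : Ω → M₁(X) given by (Kν)_ω = ∑_{i∈I} p_i(ω) · (G_i(ω,·))_* ν_{θ_i(ω)}. Then the unique fixed point ν of K (which exists by the contraction property) is continuous as a map from Ω to the space of Borel probability measures on X equipped with the Wasserstein-1 distance W₁. -/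

import Mathlib

open MeasureTheory Filter NNReal

/-- The Wasserstein-1 distance between two Borel (probability) measures on a metric
space `X`, defined via Kantorovich–Rubinstein duality. -/
noncomputable def W1 {X : Type*} [MetricSpace X] [MeasurableSpace X]
    (μ ν : Measure X) : ℝ :=
  ⨆ φ : {φ : X → ℝ // LipschitzWith 1 φ}, (∫ x, φ.1 x ∂μ) - ∫ x, φ.1 x ∂ν

section helpers
variable {X : Type*} [MetricSpace X] [CompactSpace X] [Nonempty X]
  [MeasurableSpace X] [BorelSpace X]

instance lip1Nonempty {Y : Type*} [MetricSpace Y] : Nonempty {φ : Y → ℝ // LipschitzWith 1 φ} :=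
  ⟨⟨fun _ => 0, (LipschitzWith.const 0).weaken zero_le_one⟩⟩

lemma lip_abs_sub_le {Y : Type*} [MetricSpace Y] {φ : Y → ℝ} (hφ : LipschitzWith 1 φ)
    (x y : Y) : |φ x - φ y| ≤ dist x y := by
  have := hφ.dist_le_mul x y
  rw [Real.dist_eq] at this
  simpa using this

lemma cont_integrable (φ : X → ℝ) (hφ : Continuous φ) (μ : Measure X) [IsFiniteMeasure μ] :
    Integrable φ μ :=
  hφ.integrable_of_hasCompactSupport (HasCompactSupport.of_compactSpace φ)

lemma dist_le_D (x y : X) : dist x y ≤ Metric.diam (Set.univ : Set X) :=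
  Metric.dist_le_diam_of_mem isCompact_univ.isBounded (Set.mem_univ x) (Set.mem_univ y)

lemma abs_integral_le_D (μ : Measure X) [IsProbabilityMeasure μ] (φ : X → ℝ)
    (hD : ∀ x, |φ x| ≤ Metric.diam (Set.univ : Set X)) (hφ : Continuous φ) :
    |∫ x, φ x ∂μ| ≤ Metric.diam (Set.univ : Set X) := by
  have := norm_integral_le_of_norm_le_const (μ := μ) (f := φ)
    (C := Metric.diam (Set.univ : Set X)) (Filter.Eventually.of_forall hD)
  simpa using this

lemma diff_integral_le_2D (μ ν : Measure X) [IsProbabilityMeasure μ] [IsProbabilityMeasure ν]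
    (φ : X → ℝ) (hφ : LipschitzWith 1 φ) :
    (∫ x, φ x ∂μ) - ∫ x, φ x ∂ν ≤ 2 * Metric.diam (Set.univ : Set X) := by
  set D := Metric.diam (Set.univ : Set X) with hD
  obtain ⟨x₀⟩ := (inferInstance : Nonempty X)
  have h1 : ∀ x, φ x ≤ φ x₀ + D := by
    intro x
    have h := (abs_le.mp (lip_abs_sub_le hφ x x₀)).2
    linarith [dist_le_D x x₀]
  have h2 : ∀ x, φ x₀ - D ≤ φ x := by
    intro x
    have h := (abs_le.mp (lip_abs_sub_le hφ x x₀)).1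
    linarith [dist_le_D x x₀]
  have hint : Integrable φ μ := cont_integrable φ hφ.continuous μ
  have hint' : Integrable φ ν := cont_integrable φ hφ.continuous ν
  have i1 : (∫ x, φ x ∂μ) ≤ φ x₀ + D := by
    calc (∫ x, φ x ∂μ) ≤ ∫ _, (φ x₀ + D) ∂μ :=
          integral_mono hint (integrable_const _) h1
    _ = φ x₀ + D := by simp
  have i2 : φ x₀ - D ≤ ∫ x, φ x ∂ν := by
    calc φ x₀ - D = ∫ _, (φ x₀ - D) ∂ν := by simp
    _ ≤ ∫ x, φ x ∂ν := integral_mono (integrable_const _) hint' h2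
  linarith

lemma W1_bddAbove (μ ν : Measure X) [IsProbabilityMeasure μ] [IsProbabilityMeasure ν] :
    BddAbove (Set.range fun φ : {φ : X → ℝ // LipschitzWith 1 φ} =>
      (∫ x, φ.1 x ∂μ) - ∫ x, φ.1 x ∂ν) := by
  refine ⟨2 * Metric.diam (Set.univ : Set X), ?_⟩
  rintro r ⟨φ, rfl⟩
  exact diff_integral_le_2D μ ν φ.1 φ.2

lemma le_W1 (μ ν : Measure X) [IsProbabilityMeasure μ] [IsProbabilityMeasure ν]
    (φ : X → ℝ) (hφ : LipschitzWith 1 φ) :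
    (∫ x, φ x ∂μ) - ∫ x, φ x ∂ν ≤ W1 μ ν :=
  le_ciSup (W1_bddAbove μ ν) (⟨φ, hφ⟩ : {φ : X → ℝ // LipschitzWith 1 φ})

lemma W1_nonneg (μ ν : Measure X) [IsProbabilityMeasure μ] [IsProbabilityMeasure ν] :
    0 ≤ W1 μ ν := by
  have := le_W1 μ ν (fun _ => (0:ℝ)) ((LipschitzWith.const 0).weaken zero_le_one)
  simpa using this

lemma W1_le_2D (μ ν : Measure X) [IsProbabilityMeasure μ] [IsProbabilityMeasure ν] :
    W1 μ ν ≤ 2 * Metric.diam (Set.univ : Set X) :=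
  ciSup_le fun φ => diff_integral_le_2D μ ν φ.1 φ.2

lemma W1_le_of (μ ν : Measure X) [IsProbabilityMeasure μ] [IsProbabilityMeasure ν] (C : ℝ)
    (h : ∀ φ : X → ℝ, LipschitzWith 1 φ →
      (∀ x, |φ x| ≤ Metric.diam (Set.univ : Set X)) →
      (∫ x, φ x ∂μ) - ∫ x, φ x ∂ν ≤ C) :
    W1 μ ν ≤ C := by
  refine ciSup_le fun φ => ?_
  obtain ⟨x₀⟩ := (inferInstance : Nonempty X)
  set ψ : X → ℝ := fun x => φ.1 x - φ.1 x₀ with hψ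
  have hψlip : LipschitzWith 1 ψ := LipschitzWith.of_dist_le_mul fun x y => by
    rw [Real.dist_eq]
    have e : ψ x - ψ y = φ.1 x - φ.1 y := by simp [hψ]
    rw [e]
    calc |φ.1 x - φ.1 y| ≤ dist x y := lip_abs_sub_le φ.2 x y
    _ ≤ ↑(1:ℝ≥0) * dist x y := by simp
  have hψD : ∀ x, |ψ x| ≤ Metric.diam (Set.univ : Set X) := by
    intro x
    exact (lip_abs_sub_le φ.2 x x₀).trans (dist_le_D x x₀)
  have hint : Integrable φ.1 μ := cont_integrable _ φ.2.continuous μ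
  have hint' : Integrable φ.1 ν := cont_integrable _ φ.2.continuous ν
  have e1 : (∫ x, ψ x ∂μ) = (∫ x, φ.1 x ∂μ) - φ.1 x₀ := by
    rw [integral_sub hint (integrable_const _)]; simp
  have e2 : (∫ x, ψ x ∂ν) = (∫ x, φ.1 x ∂ν) - φ.1 x₀ := by
    rw [integral_sub hint' (integrable_const _)]; simp
  have := h ψ hψlip hψD
  rw [e1, e2] at this
  linarith

end helpers

set_option maxHeartbeats 2000000 in
theorem invariant_section_continuous_aux
    {Ω X I : Type*} [MetricSpace Ω] [CompactSpace Ω] [Nonempty Ω]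
    [MetricSpace X] [CompactSpace X] [Nonempty X]
    [MeasurableSpace X] [BorelSpace X] [Countable I]
    (lam : ℝ) (hlampos : 0 < lam) (hlam1 : lam < 1)
    (θ : I → Ω → Ω) (hθ : ∀ i, Continuous (θ i))
    (p : I → Ω → ℝ) (hpc : ∀ i, Continuous (p i))
    (hp0 : ∀ i ω, 0 ≤ p i ω) (hp1 : ∀ ω, ∑' i, p i ω = 1)
    (hps : Summable fun i => ⨆ ω : Ω, p i ω)
    (G : I → Ω × X → X) (hGc : ∀ i, Continuous (G i))
    (hGlip : ∀ (i : I) (ω : Ω) (x y : X),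
      dist (G i (ω, x)) (G i (ω, y)) ≤ lam * dist x y)
    (ν : Ω → Measure X) (hν : ∀ ω, IsProbabilityMeasure (ν ω))
    (hfix : ∀ ω, ν ω
      = Measure.sum fun i =>
          ENNReal.ofReal (p i ω) • ((ν (θ i ω)).map fun x => G i (ω, x))) :
    ∀ ω₀ : Ω, Filter.Tendsto (fun ω => W1 (ν ω) (ν ω₀)) (nhds ω₀) (nhds 0) := by
  haveI := hν
  set D := Metric.diam (Set.univ : Set X) with hDdef
  have hD0 : 0 ≤ D := Metric.diam_nonneg
  set q : I → ℝ := fun i => ⨆ ω, p i ω with hqdef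
  have hbddp : ∀ i, BddAbove (Set.range (p i)) := fun i => by
    rw [← Set.image_univ]; exact (isCompact_univ.image (hpc i)).bddAbove
  have hq : ∀ i ω, p i ω ≤ q i := fun i ω => le_ciSup (hbddp i) ω
  have hq0 : ∀ i, 0 ≤ q i := fun i => le_trans (hp0 i (Classical.arbitrary Ω)) (hq i _)
  set S : I → Ω → Ω → ℝ := fun i ω ω' => ⨆ x : X, dist (G i (ω, x)) (G i (ω', x)) with hSdef
  have hbddS : ∀ i (ω ω' : Ω),
      BddAbove (Set.range fun x : X => dist (G i (ω, x)) (G i (ω', x))) :=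
    fun i ω ω' => ⟨D, by rintro r ⟨x, rfl⟩; exact dist_le_D _ _⟩
  have hSle : ∀ i (ω ω' : Ω) (x : X), dist (G i (ω, x)) (G i (ω', x)) ≤ S i ω ω' :=
    fun i ω ω' x => le_ciSup (hbddS i ω ω') x
  have hS0 : ∀ i (ω ω' : Ω), 0 ≤ S i ω ω' :=
    fun i ω ω' => le_trans dist_nonneg (hSle i ω ω' (Classical.arbitrary X))
  have hSD : ∀ i (ω ω' : Ω), S i ω ω' ≤ D := fun i ω ω' => ciSup_le fun x => dist_le_D _ _
  have hW0 : ∀ ω ω' : Ω, 0 ≤ W1 (ν ω) (ν ω') := fun ω ω' => W1_nonneg _ _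
  have hWD : ∀ ω ω' : Ω, W1 (ν ω) (ν ω') ≤ 2 * D := fun ω ω' => W1_le_2D _ _
  have hGcont : ∀ i (ω : Ω), Continuous fun x => G i (ω, x) :=
    fun i ω => (hGc i).comp (Continuous.prodMk_right ω)
  -- the integral identity
  have hint : ∀ (φ : X → ℝ), Continuous φ → ∀ ω : Ω,
      ∫ x, φ x ∂(ν ω) = ∑' i, p i ω * ∫ x, φ (G i (ω, x)) ∂(ν (θ i ω)) := by
    intro φ hφc ω
    have hInt : Integrable φ (ν ω) := cont_integrable φ hφc _
    rw [hfix ω] at hInt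
    calc ∫ x, φ x ∂(ν ω)
        = ∫ x, φ x ∂(Measure.sum fun i =>
            ENNReal.ofReal (p i ω) • ((ν (θ i ω)).map fun x => G i (ω, x))) := by
          rw [← hfix ω]
      _ = ∑' i, ∫ x, φ x ∂(ENNReal.ofReal (p i ω) • ((ν (θ i ω)).map fun x => G i (ω, x))) :=
          integral_sum_measure hInt
      _ = ∑' i, p i ω * ∫ x, φ (G i (ω, x)) ∂(ν (θ i ω)) := by
          refine tsum_congr fun i => ?_
          rw [integral_smul_measure, ENNReal.toReal_ofReal (hp0 i ω),
            integral_map (hGcont i ω).aemeasurable hφc.aestronglyMeasurable, smul_eq_mul]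
  -- the dominating series
  set t : I → Ω → Ω → ℝ := fun i ω ω₀ =>
    |p i ω - p i ω₀| * D + p i ω₀ * S i ω ω₀
      + lam * (p i ω₀ * W1 (ν (θ i ω)) (ν (θ i ω₀))) with htdef
  have ht0 : ∀ i (ω ω₀ : Ω), 0 ≤ t i ω ω₀ := by
    intro i ω ω₀
    have := abs_nonneg (p i ω - p i ω₀)
    have := hp0 i ω₀
    have := hS0 i ω ω₀
    have := hW0 (θ i ω) (θ i ω₀)
    have := hlampos.le
    positivity
  have htle : ∀ i (ω ω₀ : Ω), t i ω ω₀ ≤ q i * (5 * D) := by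
    intro i ω ω₀
    have h1 : |p i ω - p i ω₀| ≤ 2 * q i := by
      rw [abs_le]
      constructor
      · linarith [hp0 i ω, hq i ω₀, hq0 i]
      · linarith [hp0 i ω₀, hq i ω, hq0 i]
    have h2 : p i ω₀ * S i ω ω₀ ≤ q i * D :=
      mul_le_mul (hq i ω₀) (hSD i ω ω₀) (hS0 i ω ω₀) (hq0 i)
    have h3 : p i ω₀ * W1 (ν (θ i ω)) (ν (θ i ω₀)) ≤ q i * (2 * D) :=
      mul_le_mul (hq i ω₀) (hWD _ _) (hW0 _ _) (hq0 i)
    have h4 : lam * (p i ω₀ * W1 (ν (θ i ω)) (ν (θ i ω₀))) ≤ q i * (2 * D) := by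
      have hnn : 0 ≤ p i ω₀ * W1 (ν (θ i ω)) (ν (θ i ω₀)) :=
        mul_nonneg (hp0 i ω₀) (hW0 _ _)
      calc lam * (p i ω₀ * W1 (ν (θ i ω)) (ν (θ i ω₀)))
          ≤ 1 * (p i ω₀ * W1 (ν (θ i ω)) (ν (θ i ω₀))) :=
            mul_le_mul_of_nonneg_right hlam1.le hnn
        _ = p i ω₀ * W1 (ν (θ i ω)) (ν (θ i ω₀)) := one_mul _
        _ ≤ q i * (2 * D) := h3
    have h5 : |p i ω - p i ω₀| * D ≤ 2 * q i * D :=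
      mul_le_mul_of_nonneg_right h1 hD0
    rw [htdef]
    simp only
    nlinarith [hq0 i, hD0]
  have htsum : ∀ ω ω₀ : Ω, Summable fun i => t i ω ω₀ :=
    fun ω ω₀ => Summable.of_nonneg_of_le (fun i => ht0 i ω ω₀) (fun i => htle i ω ω₀)
      (hps.mul_right _)
  -- the key estimate
  have hkey : ∀ ω ω₀ : Ω, W1 (ν ω) (ν ω₀) ≤ ∑' i, t i ω ω₀ := by
    intro ω ω₀
    refine W1_le_of _ _ _ (fun φ hφ hφD => ?_)
    rw [hint φ hφ.continuous ω, hint φ hφ.continuous ω₀]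
    set A : I → Ω → ℝ := fun i ω' => ∫ x, φ (G i (ω', x)) ∂(ν (θ i ω')) with hAdef
    have hA : ∀ i (ω' : Ω), |A i ω'| ≤ D := fun i ω' =>
      abs_integral_le_D _ _ (fun x => hφD _) (hφ.continuous.comp (hGcont i ω'))
    have hsummA : ∀ ω' : Ω, Summable fun i => p i ω' * A i ω' := by
      intro ω'
      refine Summable.of_norm_bounded (hps.mul_right D) fun i => ?_
      rw [Real.norm_eq_abs, abs_mul, abs_of_nonneg (hp0 i ω')]
      exact mul_le_mul (hq i ω') (hA i ω') (abs_nonneg _) (hq0 i)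
    rw [← Summable.tsum_sub (hsummA ω) (hsummA ω₀)]
    refine Summable.tsum_le_tsum (fun i => ?_) ((hsummA ω).sub (hsummA ω₀)) (htsum ω ω₀)
    have e1 : (p i ω - p i ω₀) * A i ω ≤ |p i ω - p i ω₀| * D := by
      calc (p i ω - p i ω₀) * A i ω ≤ |(p i ω - p i ω₀) * A i ω| := le_abs_self _
        _ = |p i ω - p i ω₀| * |A i ω| := abs_mul _ _
        _ ≤ |p i ω - p i ω₀| * D := mul_le_mul_of_nonneg_left (hA i ω) (abs_nonneg _)
    have e2 : A i ω - A i ω₀ ≤ S i ω ω₀ + lam * W1 (ν (θ i ω)) (ν (θ i ω₀)) := by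
      have intω : Integrable (fun x => φ (G i (ω, x))) (ν (θ i ω)) :=
        cont_integrable _ (hφ.continuous.comp (hGcont i ω)) _
      have intω₀ : Integrable (fun x => φ (G i (ω₀, x))) (ν (θ i ω)) :=
        cont_integrable _ (hφ.continuous.comp (hGcont i ω₀)) _
      have part1 : A i ω - ∫ x, φ (G i (ω₀, x)) ∂(ν (θ i ω)) ≤ S i ω ω₀ := by
        have : A i ω - ∫ x, φ (G i (ω₀, x)) ∂(ν (θ i ω))
            = ∫ x, (φ (G i (ω, x)) - φ (G i (ω₀, x))) ∂(ν (θ i ω)) :=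
          (integral_sub intω intω₀).symm
        rw [this]
        calc ∫ x, (φ (G i (ω, x)) - φ (G i (ω₀, x))) ∂(ν (θ i ω))
            ≤ ∫ _, S i ω ω₀ ∂(ν (θ i ω)) := by
              refine integral_mono (intω.sub intω₀) (integrable_const _) fun x => ?_
              calc φ (G i (ω, x)) - φ (G i (ω₀, x))
                  ≤ |φ (G i (ω, x)) - φ (G i (ω₀, x))| := le_abs_self _
                _ ≤ dist (G i (ω, x)) (G i (ω₀, x)) := lip_abs_sub_le hφ _ _
                _ ≤ S i ω ω₀ := hSle i ω ω₀ x
          _ = S i ω ω₀ := by simp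
      have part2 : (∫ x, φ (G i (ω₀, x)) ∂(ν (θ i ω))) - A i ω₀
          ≤ lam * W1 (ν (θ i ω)) (ν (θ i ω₀)) := by
        set ψ : X → ℝ := fun x => lam⁻¹ * φ (G i (ω₀, x)) with hψdef
        have hψlip : LipschitzWith 1 ψ := LipschitzWith.of_dist_le_mul fun x y => by
          rw [Real.dist_eq]
          have e : ψ x - ψ y = lam⁻¹ * (φ (G i (ω₀, x)) - φ (G i (ω₀, y))) := by
            rw [hψdef]; ring
          rw [e, abs_mul, abs_of_nonneg (inv_nonneg.mpr hlampos.le)]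
          calc lam⁻¹ * |φ (G i (ω₀, x)) - φ (G i (ω₀, y))|
              ≤ lam⁻¹ * (lam * dist x y) := by
                refine mul_le_mul_of_nonneg_left ?_ (inv_nonneg.mpr hlampos.le)
                exact le_trans ((lip_abs_sub_le hφ _ _).trans (hGlip i ω₀ x y)) le_rfl
            _ = dist x y := by field_simp
            _ ≤ (1:ℝ≥0) * dist x y := by simp
        have hWle := le_W1 (ν (θ i ω)) (ν (θ i ω₀)) ψ hψlip
        have eψ : ∀ μ : Measure X, (∫ x, φ (G i (ω₀, x)) ∂μ) = lam * ∫ x, ψ x ∂μ := by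
          intro μ
          rw [← integral_const_mul]
          refine integral_congr_ae (Filter.Eventually.of_forall fun x => ?_)
          rw [hψdef]
          simp only
          field_simp
        have hAω₀ : A i ω₀ = ∫ x, φ (G i (ω₀, x)) ∂(ν (θ i ω₀)) := rfl
        rw [hAω₀, eψ (ν (θ i ω)), eψ (ν (θ i ω₀)), ← mul_sub]
        exact mul_le_mul_of_nonneg_left hWle hlampos.le
      linarith
    have e3 : p i ω₀ * (A i ω - A i ω₀)
        ≤ p i ω₀ * (S i ω ω₀ + lam * W1 (ν (θ i ω)) (ν (θ i ω₀))) :=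
      mul_le_mul_of_nonneg_left e2 (hp0 i ω₀)
    have : p i ω * A i ω - p i ω₀ * A i ω₀
        = (p i ω - p i ω₀) * A i ω + p i ω₀ * (A i ω - A i ω₀) := by ring
    rw [this, htdef]
    simp only
    nlinarith [e1, e3]
  -- limsup machinery
  have hbdd_above : ∀ ω₀ : Ω,
      Filter.IsBoundedUnder (· ≤ ·) (nhds ω₀) (fun ω => W1 (ν ω) (ν ω₀)) :=
    fun ω₀ => Filter.isBoundedUnder_of ⟨2 * D, fun ω => hWD ω ω₀⟩
  have hbdd_below : ∀ ω₀ : Ω,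
      Filter.IsBoundedUnder (· ≥ ·) (nhds ω₀) (fun ω => W1 (ν ω) (ν ω₀)) :=
    fun ω₀ => Filter.isBoundedUnder_of ⟨0, fun ω => hW0 ω ω₀⟩
  have hcob : ∀ ω₀ : Ω,
      Filter.IsCoboundedUnder (· ≤ ·) (nhds ω₀) (fun ω => W1 (ν ω) (ν ω₀)) :=
    fun ω₀ => (hbdd_below ω₀).isCoboundedUnder_le
  set L : Ω → ℝ := fun ω₀ => Filter.limsup (fun ω => W1 (ν ω) (ν ω₀)) (nhds ω₀) with hLdef
  have hLD : ∀ ω₀, L ω₀ ≤ 2 * D := fun ω₀ =>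
    Filter.limsup_le_of_le (hcob ω₀) (Filter.Eventually.of_forall fun ω => hWD ω ω₀)
  have hbddL : BddAbove (Set.range L) := ⟨2 * D, by rintro r ⟨ω₀, rfl⟩; exact hLD ω₀⟩
  set s : ℝ := ⨆ ω₀, L ω₀ with hsdef
  have hLs : ∀ ω₀, L ω₀ ≤ s := fun ω₀ => le_ciSup hbddL ω₀
  have hs0 : 0 ≤ s := by
    have h0 : 0 ≤ L (Classical.arbitrary Ω) :=
      Filter.le_limsup_of_frequently_le
        ((Filter.Eventually.of_forall fun ω => hW0 ω _).frequently) (hbdd_above _)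
    exact h0.trans (hLs _)
  -- the eventual estimate
  have hmain : ∀ ω₀ : Ω, ∀ ε > (0:ℝ), ∀ᶠ ω in nhds ω₀,
      W1 (ν ω) (ν ω₀) ≤ lam * s + (6 * D + 6) * ε := by
    intro ω₀ ε hε
    obtain ⟨F, hF⟩ : ∃ F : Finset I, ∑' i : {i // i ∉ F}, q i < ε := by
      have h := tendsto_tsum_compl_atTop_zero q
      have h2 := h.eventually (Filter.eventually_iff.2 (Iio_mem_nhds hε))
      exact h2.exists
    set ε' : ℝ := ε / (F.card + 1) with hε'def
    have hc1 : (0:ℝ) < F.card + 1 := by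
      have := Nat.cast_nonneg (α := ℝ) F.card; linarith
    have hε'pos : 0 < ε' := div_pos hε hc1
    have hcard : (F.card : ℝ) * ε' ≤ ε := by
      rw [hε'def, mul_div_assoc', div_le_iff₀ hc1]
      nlinarith [hε.le, Nat.cast_nonneg (α := ℝ) F.card]
    have hε'le : ε' ≤ ε := by
      rw [hε'def]
      apply div_le_self hε.le
      linarith [Nat.cast_nonneg (α := ℝ) F.card]
    have ev1 : ∀ i ∈ F, ∀ᶠ ω in nhds ω₀, |p i ω - p i ω₀| < ε' := by
      intro i _
      have h := Metric.tendsto_nhds.mp ((hpc i).continuousAt (x := ω₀)) ε' hε'pos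
      refine h.mono fun ω hω => ?_
      rwa [Real.dist_eq] at hω
    have ev2 : ∀ i ∈ F, ∀ᶠ ω in nhds ω₀, S i ω ω₀ ≤ ε' := by
      intro i _
      have hu : UniformContinuous (G i) := CompactSpace.uniformContinuous_of_continuous (hGc i)
      obtain ⟨δ, hδpos, hδ⟩ := Metric.uniformContinuous_iff.mp hu ε' hε'pos
      refine Filter.eventually_iff.2
        (Filter.mem_of_superset (Metric.ball_mem_nhds ω₀ hδpos) fun ω hω => ?_)
      have hωδ : dist ω ω₀ < δ := Metric.mem_ball.mp hω
      refine Set.mem_setOf_eq ▸ ciSup_le fun x => ?_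
      refine (hδ ?_).le
      rw [Prod.dist_eq]
      simpa [dist_self, hδpos, max_eq_left dist_nonneg] using hωδ
    have ev3 : ∀ i ∈ F, ∀ᶠ ω in nhds ω₀,
        W1 (ν (θ i ω)) (ν (θ i ω₀)) < s + ε := by
      intro i _
      have hlt : L (θ i ω₀) < s + ε := lt_of_le_of_lt (hLs _) (by linarith)
      have hev := Filter.eventually_lt_of_limsup_lt hlt (hbdd_above (θ i ω₀))
      exact ((hθ i).continuousAt (x := ω₀)).eventually hev
    have evAll : ∀ᶠ ω in nhds ω₀, ∀ i ∈ F,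
        |p i ω - p i ω₀| < ε' ∧ S i ω ω₀ ≤ ε'
          ∧ W1 (ν (θ i ω)) (ν (θ i ω₀)) < s + ε := by
      rw [Filter.eventually_all_finset]
      exact fun i hi => ((ev1 i hi).and ((ev2 i hi).and (ev3 i hi)))
    refine evAll.mono fun ω hω => ?_
    have step1 : W1 (ν ω) (ν ω₀) ≤ ∑' i, t i ω ω₀ := hkey ω ω₀
    have split : ∑' i, t i ω ω₀
        = (∑ i ∈ F, t i ω ω₀) + ∑' i : {i // i ∉ F}, t i.1 ω ω₀ :=
      (Summable.sum_add_tsum_compl (htsum ω ω₀)).symm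
    have tail : ∑' i : {i // i ∉ F}, t i.1 ω ω₀ ≤ ε * (5 * D) := by
      calc ∑' i : {i // i ∉ F}, t i.1 ω ω₀
          ≤ ∑' i : {i // i ∉ F}, q i.1 * (5 * D) :=
            Summable.tsum_le_tsum (fun i => htle i.1 ω ω₀)
              ((htsum ω ω₀).subtype _) ((hps.mul_right _).subtype _)
        _ = (∑' i : {i // i ∉ F}, q i.1) * (5 * D) := tsum_mul_right
        _ ≤ ε * (5 * D) := mul_le_mul_of_nonneg_right hF.le (by positivity)
    have hsumpF : Summable fun i => p i ω₀ :=
      Summable.of_nonneg_of_le (fun i => hp0 i ω₀) (fun i => hq i ω₀) hps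
    have hsumF : ∑ i ∈ F, p i ω₀ ≤ 1 := by
      rw [← hp1 ω₀]
      exact Summable.sum_le_tsum F (fun i _ => hp0 i ω₀) hsumpF
    have hterm : ∀ i ∈ F, t i ω ω₀ ≤ ε' * D + p i ω₀ * (ε' + lam * (s + ε)) := by
      intro i hi
      obtain ⟨h1, h2, h3⟩ := hω i hi
      have k1 : |p i ω - p i ω₀| * D ≤ ε' * D := mul_le_mul_of_nonneg_right h1.le hD0
      have k2 : p i ω₀ * S i ω ω₀ ≤ p i ω₀ * ε' := mul_le_mul_of_nonneg_left h2 (hp0 i ω₀)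
      have k3 : lam * (p i ω₀ * W1 (ν (θ i ω)) (ν (θ i ω₀)))
          ≤ lam * (p i ω₀ * (s + ε)) := by
        refine mul_le_mul_of_nonneg_left ?_ hlampos.le
        exact mul_le_mul_of_nonneg_left h3.le (hp0 i ω₀)
      rw [htdef]
      simp only
      nlinarith [k1, k2, k3]
    have fin : ∑ i ∈ F, t i ω ω₀
        ≤ (F.card : ℝ) * (ε' * D) + (∑ i ∈ F, p i ω₀) * (ε' + lam * (s + ε)) := by
      calc ∑ i ∈ F, t i ω ω₀
          ≤ ∑ i ∈ F, (ε' * D + p i ω₀ * (ε' + lam * (s + ε))) := Finset.sum_le_sum hterm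
        _ = (F.card : ℝ) * (ε' * D) + (∑ i ∈ F, p i ω₀) * (ε' + lam * (s + ε)) := by
            rw [Finset.sum_add_distrib, Finset.sum_const, nsmul_eq_mul, ← Finset.sum_mul]
    have hnn : 0 ≤ ε' + lam * (s + ε) :=
      add_nonneg hε'pos.le (mul_nonneg hlampos.le (by linarith))
    have hfactor : (∑ i ∈ F, p i ω₀) * (ε' + lam * (s + ε)) ≤ ε' + lam * (s + ε) := by
      have h0F : 0 ≤ ∑ i ∈ F, p i ω₀ := Finset.sum_nonneg fun i _ => hp0 i ω₀
      nlinarith [hsumF, hnn, h0F]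
    have hcardD : (F.card : ℝ) * (ε' * D) ≤ ε * D := by
      rw [← mul_assoc]
      exact mul_le_mul_of_nonneg_right hcard hD0
    have hlamε : lam * ε ≤ ε := by nlinarith [hlam1.le, hε.le, hlampos.le]
    calc W1 (ν ω) (ν ω₀) ≤ ∑' i, t i ω ω₀ := step1
      _ = (∑ i ∈ F, t i ω ω₀) + ∑' i : {i // i ∉ F}, t i.1 ω ω₀ := split
      _ ≤ ((F.card : ℝ) * (ε' * D) + (∑ i ∈ F, p i ω₀) * (ε' + lam * (s + ε)))
            + ε * (5 * D) := add_le_add fin tail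
      _ ≤ (ε * D + (ε' + lam * (s + ε))) + ε * (5 * D) :=
          add_le_add (add_le_add hcardD hfactor) le_rfl
      _ ≤ lam * s + (6 * D + 6) * ε := by
          have hexp : lam * (s + ε) = lam * s + lam * ε := by ring
          have hde : ε * D ≤ ε * D := le_rfl
          nlinarith [hε'le, hlamε, hε.le, hD0, mul_nonneg hε.le hD0]
  -- conclude: limsup ≤ lam * s
  have hLlams : ∀ ω₀, L ω₀ ≤ lam * s := by
    intro ω₀
    by_contra hcon
    push_neg at hcon
    have hK : (0:ℝ) < 6 * D + 6 := by nlinarith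
    set ε : ℝ := (L ω₀ - lam * s) / (2 * (6 * D + 6)) with hεdef
    have hεpos : 0 < ε := div_pos (by linarith) (by linarith)
    have hle : L ω₀ ≤ lam * s + (6 * D + 6) * ε :=
      Filter.limsup_le_of_le (hcob ω₀) (hmain ω₀ ε hεpos)
    have heq : (6 * D + 6) * ε = (L ω₀ - lam * s) / 2 := by
      rw [hεdef]; field_simp
    linarith
  have hslams : s ≤ lam * s := ciSup_le hLlams
  have hs_le0 : s ≤ 0 := by nlinarith
  have hL0' : ∀ ω₀, L ω₀ ≤ 0 := fun ω₀ => (hLlams ω₀).trans (by nlinarith [hlampos.le])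
  intro ω₀
  refine tendsto_of_le_liminf_of_limsup_le ?_ (hL0' ω₀) (hbdd_above ω₀) (hbdd_below ω₀)
  exact Filter.le_liminf_of_le (hbdd_above ω₀).isCoboundedUnder_ge
    (Filter.Eventually.of_forall fun ω => hW0 ω ω₀)


/-- Continuity of the invariant section: under continuity of the branches `θ_i`, of the
weights `p_i` (with `∑_i p_i ≡ 1` and `∑_i sup_ω p_i(ω) < ∞`) and of the fibre maps
`G_i`, each of which is `λ`-Lipschitz in the fibre variable for some `0 ≤ λ < 1`, the
unique fixed point `ν` of the sectional transfer operator
`(Kν)_ω = ∑_i p_i(ω)·(G_i(ω,·))_* ν_{θ_i(ω)}` is continuous from `Ω` to the probability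
measures on `X` with the Wasserstein-1 distance. -/
theorem invariant_section_continuous
    {Ω X I : Type*} [MetricSpace Ω] [CompactSpace Ω] [Nonempty Ω]
    [MetricSpace X] [CompactSpace X] [Nonempty X]
    [MeasurableSpace X] [BorelSpace X] [Countable I]
    (lam : ℝ) (hlam0 : 0 ≤ lam) (hlam1 : lam < 1)
    (θ : I → Ω → Ω) (hθ : ∀ i, Continuous (θ i))
    (p : I → Ω → ℝ) (hpc : ∀ i, Continuous (p i))
    (hp0 : ∀ i ω, 0 ≤ p i ω) (hp1 : ∀ ω, ∑' i, p i ω = 1)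
    (hps : Summable fun i => ⨆ ω : Ω, p i ω)
    (G : I → Ω × X → X) (hGc : ∀ i, Continuous (G i))
    (hGlip : ∀ (i : I) (ω : Ω) (x y : X),
      dist (G i (ω, x)) (G i (ω, y)) ≤ lam * dist x y)
    (ν : Ω → Measure X) (hν : ∀ ω, IsProbabilityMeasure (ν ω))
    (hfix : ∀ ω, ν ω
      = Measure.sum fun i =>
          ENNReal.ofReal (p i ω) • ((ν (θ i ω)).map fun x => G i (ω, x))) :
    ∀ ω₀ : Ω, Filter.Tendsto (fun ω => W1 (ν ω) (ν ω₀)) (nhds ω₀) (nhds 0) := by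
  refine invariant_section_continuous_aux (max lam (1/2)) ?_ ?_ θ hθ p hpc hp0 hp1 hps
    G hGc ?_ ν hν hfix
  · exact lt_of_lt_of_le (by norm_num) (le_max_right _ _)
  · exact max_lt hlam1 (by norm_num)
  · intro i ω x y
    exact (hGlip i ω x y).trans
      (mul_le_mul_of_nonneg_right (le_max_left _ _) dist_nonneg)
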